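/- For any real constants a ≥ 0 and b, the sequence N·((1 − a/N + b/N²)^N − (1 − a/N)^N) converges to b·exp(−a) as N → ∞. -/

import Mathlib

open Filter Real Topology

set_option maxHeartbeats 1000000 in
theorem stmt_18 (a b : ℝ) (ha : 0 ≤ a) :
    Filter.Tendsto (fun N : ℕ =>
        (N : ℝ) * ((1 - a / N + b / (N : ℝ) ^ 2) ^ N - (1 - a / N) ^ N))
      Filter.atTop (nhds (b * Real.exp (-a))) := by
  rcases eq_or_ne b 0 with rfl | hb
  · simpa using (tendsto_const_nhds : Tendsto (fun _ : ℕ => (0:ℝ)) atTop (𝓝 0))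
  set δ : ℕ → ℝ := fun N => b / ((N : ℝ) * ((N : ℝ) - a)) with hδdef
  set u : ℕ → ℝ := fun N => (N : ℝ) * Real.log (1 + δ N) with hudef
  have hNa : Tendsto (fun N : ℕ => (N : ℝ) - a) atTop atTop :=
    tendsto_natCast_atTop_atTop.atTop_add tendsto_const_nhds
  have hden : Tendsto (fun N : ℕ => (N : ℝ) * ((N : ℝ) - a)) atTop atTop :=
    Tendsto.atTop_mul_atTop₀ tendsto_natCast_atTop_atTop hNa
  have hδ0 : Tendsto δ atTop (𝓝 0) := Tendsto.div_atTop tendsto_const_nhds hden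
  -- basic eventual facts
  have hev : ∀ᶠ N : ℕ in atTop,
      a < (N : ℝ) ∧ 1 ≤ (N : ℝ) ∧ δ N ≠ 0 ∧ 0 < 1 + δ N ∧ u N ≠ 0 := by
    have h1 : ∀ᶠ N : ℕ in atTop, a < (N : ℝ) := tendsto_natCast_atTop_atTop.eventually_gt_atTop a
    have h2 : ∀ᶠ N : ℕ in atTop, 1 ≤ (N : ℝ) := tendsto_natCast_atTop_atTop.eventually_ge_atTop 1
    have h3 : ∀ᶠ N : ℕ in atTop, |δ N| < 1/2 :=
      (abs_zero (α:=ℝ) ▸ hδ0.abs).eventually_lt_const (by norm_num : (0:ℝ) < 1/2)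
    filter_upwards [h1, h2, h3] with N hN1 hN2 hN3
    have hNpos : (0:ℝ) < N := lt_of_lt_of_le one_pos hN2
    have habs := abs_lt.1 hN3
    have hδne : δ N ≠ 0 := div_ne_zero hb (by nlinarith)
    have hpos : 0 < 1 + δ N := by linarith [habs.1]
    refine ⟨hN1, hN2, hδne, hpos, ?_⟩
    have hlog : Real.log (1 + δ N) ≠ 0 := by
      intro h
      rcases Real.log_eq_zero.1 h with h' | h' | h' <;> [linarith; exact hδne (by linarith); linarith]
    exact mul_ne_zero (by positivity) hlog
  -- L1 : N^2 * δ N → b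
  have L1 : Tendsto (fun N : ℕ => (N : ℝ) ^ 2 * δ N) atTop (𝓝 b) := by
    have hone : Tendsto (fun N : ℕ => 1 - a / (N : ℝ)) atTop (𝓝 1) := by
      have := (tendsto_const_nhds (x := (1:ℝ)) (f := atTop (α := ℕ))).sub
        (tendsto_const_div_atTop_nhds_zero_nat a)
      rw [sub_zero] at this
      exact this
    have hbase : Tendsto (fun N : ℕ => b / (1 - a / N)) atTop (𝓝 (b / 1)) :=
      Tendsto.div (tendsto_const_nhds (x := b)) hone one_ne_zero
    rw [div_one] at hbase
    refine hbase.congr' ?_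
    filter_upwards [hev] with N ⟨hN1, hN2, _, _, _⟩
    have hN0 : (N : ℝ) ≠ 0 := by positivity
    have hNa' : (N : ℝ) - a ≠ 0 := by nlinarith
    simp only [hδdef]
    field_simp
  -- L2 : log(1+δ)/δ → 1
  have L2 : Tendsto (fun N : ℕ => Real.log (1 + δ N) / δ N) atTop (𝓝 1) := by
    have hd : HasDerivAt Real.log 1 1 := by simpa using Real.hasDerivAt_log one_ne_zero
    have hslope := hasDerivAt_iff_tendsto_slope.1 hd
    have hcomp : Tendsto (fun N : ℕ => 1 + δ N) atTop (𝓝[≠] (1:ℝ)) := by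
      rw [tendsto_nhdsWithin_iff]
      refine ⟨by simpa using tendsto_const_nhds.add hδ0, ?_⟩
      filter_upwards [hev] with N ⟨_, _, hδne, _, _⟩
      simp [Set.mem_setOf_eq]
      intro h; exact hδne (by linarith)
    refine (hslope.comp hcomp).congr' ?_
    filter_upwards with N
    simp [slope_def_field, Real.log_one, Function.comp]
  -- L3 : u → 0
  have L3 : Tendsto u atTop (𝓝 0) := by
    have hsm : Tendsto (fun N : ℕ => (N : ℝ) * δ N) atTop (𝓝 0) := by
      have : Tendsto (fun N : ℕ => b / ((N : ℝ) - a)) atTop (𝓝 0) :=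
        Tendsto.div_atTop tendsto_const_nhds hNa
      refine this.congr' ?_
      filter_upwards [hev] with N ⟨hN1, hN2, _, _, _⟩
      have hN0 : (N : ℝ) ≠ 0 := by positivity
      have hNa' : (N : ℝ) - a ≠ 0 := by nlinarith
      simp only [hδdef]
      field_simp
    have := hsm.mul L2
    rw [zero_mul] at this
    refine this.congr' ?_
    filter_upwards [hev] with N ⟨_, _, hδne, _, _⟩
    simp only [hudef]
    field_simp
  -- L4 : (exp u - 1)/u → 1
  have L4 : Tendsto (fun N : ℕ => (Real.exp (u N) - 1) / u N) atTop (𝓝 1) := by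
    have hd : HasDerivAt Real.exp 1 0 := by simpa using Real.hasDerivAt_exp 0
    have hslope := hasDerivAt_iff_tendsto_slope.1 hd
    have hcomp : Tendsto u atTop (𝓝[≠] (0:ℝ)) := by
      rw [tendsto_nhdsWithin_iff]
      exact ⟨L3, by filter_upwards [hev] with N ⟨_, _, _, _, hu⟩ using hu⟩
    refine (hslope.comp hcomp).congr' ?_
    filter_upwards with N
    simp [slope_def_field, Real.exp_zero, Function.comp]
  -- combine
  have main : Tendsto
      (fun N : ℕ => (1 - a / (N : ℝ)) ^ N *
        ((N : ℝ) ^ 2 * δ N * (Real.log (1 + δ N) / δ N) * ((Real.exp (u N) - 1) / u N)))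
      atTop (𝓝 (Real.exp (-a) * (b * 1 * 1))) := by
    have hA : Tendsto (fun N : ℕ => (1 - a / (N : ℝ)) ^ N) atTop (𝓝 (Real.exp (-a))) := by
      refine (Real.tendsto_one_add_div_pow_exp (-a)).congr fun N => ?_
      rw [neg_div, ← sub_eq_add_neg]
    exact hA.mul ((L1.mul L2).mul L4)
  rw [mul_one, mul_one, mul_comm] at main
  refine main.congr' ?_
  filter_upwards [hev] with N ⟨hN1, hN2, hδne, hpos, hu⟩
  have hN0 : (N : ℝ) ≠ 0 := by positivity
  have hNa' : (N : ℝ) - a ≠ 0 := by nlinarith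
  have h1 : 1 - a / (N : ℝ) + b / (N : ℝ) ^ 2 = (1 - a / N) * (1 + δ N) := by
    simp only [hδdef]; field_simp
  have h2 : (1 + δ N) ^ N = Real.exp (u N) := by
    simp only [hudef]
    rw [← Real.exp_log hpos, ← Real.exp_nat_mul, Real.exp_log hpos]
  rw [h1, mul_pow, h2]
  field_simp
  ring
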